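/- Let n ≥ 2 and N ≥ 2 be integers, let G be a simple undirected graph on {1,…,N} with symmetric edge weights k_ij = k_ji > 0, and let x_1,…,x_N be unit vectors in ℝ^{n+1}. Then the largest eigenvalue β(x) of the real symmetric matrix B(x) satisfies β(x) ≥ (2/(N(n+1))) Σ_{{i,j}∈E} k_ij (n − 1 − ⟨x_i, x_j⟩)(1 − ⟨x_i, x_j⟩), where the sum ranges over the edges of G. -/

import Mathlib

open Matrix BigOperators Real

noncomputable section

/-- The orthogonal projection `I - x xᵀ` onto the hyperplane orthogonal to `x`. -/
def proj {n : ℕ} (x : Fin (n + 1) → ℝ) : Matrix (Fin (n + 1)) (Fin (n + 1)) ℝ :=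
  1 - Matrix.vecMulVec x x

/-- The linearization `B(x)` of the homogeneous Lohe model, as an
`N(n+1) × N(n+1)` block matrix indexed by `Fin N × Fin (n+1)`. -/
def Bmat {n N : ℕ} (G : SimpleGraph (Fin N)) [DecidableRel G.Adj]
    (k : Fin N → Fin N → ℝ) (x : Fin N → Fin (n + 1) → ℝ) :
    Matrix (Fin N × Fin (n + 1)) (Fin N × Fin (n + 1)) ℝ :=
  Matrix.of fun p q =>
    if p.1 = q.1 then
      ((-(∑ l ∈ G.neighborFinset p.1, k p.1 l * (x l ⬝ᵥ x p.1))) • proj (x p.1)) p.2 q.2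
    else if G.Adj p.1 q.1 then
      (k p.1 q.1 • (proj (x p.1) * proj (x q.1))) p.2 q.2
    else 0

lemma proj_transpose {n : ℕ} (x : Fin (n + 1) → ℝ) : (proj x)ᵀ = proj x := by
  simp only [proj, transpose_sub, transpose_one]
  congr 1
  ext b c
  simp [vecMulVec_apply, mul_comm]

lemma vecMulVec_mul_vecMulVec' {n : ℕ} (a b c d : Fin (n+1) → ℝ) :
    Matrix.vecMulVec a b * Matrix.vecMulVec c d = (b ⬝ᵥ c) • Matrix.vecMulVec a d := by
  ext i j
  simp [mul_apply, vecMulVec_apply, dotProduct, Finset.mul_sum, Finset.sum_mul]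
  congr 1; ext e; ring

lemma proj_mul_proj {n : ℕ} (y z : Fin (n+1) → ℝ) :
    proj y * proj z = 1 - Matrix.vecMulVec y y - Matrix.vecMulVec z z
      + (y ⬝ᵥ z) • Matrix.vecMulVec y z := by
  simp [proj, sub_mul, mul_sub, vecMulVec_mul_vecMulVec']
  abel

lemma trace_vecMulVec' {n : ℕ} (y z : Fin (n+1) → ℝ) :
    Matrix.trace (Matrix.vecMulVec y z) = y ⬝ᵥ z := by
  simp [Matrix.trace, Matrix.diag, vecMulVec_apply, dotProduct]

lemma trace_proj {n : ℕ} (y : Fin (n+1) → ℝ) (hy : y ⬝ᵥ y = 1) :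
    Matrix.trace (proj y) = (n : ℝ) := by
  simp [proj, trace_sub, trace_vecMulVec', hy, Matrix.trace_one]

lemma trace_proj_mul_proj {n : ℕ} (y z : Fin (n+1) → ℝ)
    (hy : y ⬝ᵥ y = 1) (hz : z ⬝ᵥ z = 1) :
    Matrix.trace (proj y * proj z) = (n : ℝ) - 1 + (y ⬝ᵥ z)^2 := by
  rw [proj_mul_proj]
  simp [trace_vecMulVec', hy, hz, sq, Matrix.trace_one]

lemma proj_idem {n : ℕ} (y : Fin (n+1) → ℝ) (hy : y ⬝ᵥ y = 1) :
    proj y * proj y = proj y := by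
  rw [proj_mul_proj, hy, proj]
  ext i j
  simp [vecMulVec_apply]

lemma trace_form {m : Type*} [Fintype m] (A C : Matrix m m ℝ) :
    ∑ b, ∑ c, A b c * C b c = Matrix.trace (A * Cᵀ) := by
  simp [Matrix.trace, Matrix.diag, mul_apply]

lemma sumA {n : ℕ} (y z : Fin (n+1) → ℝ) (b c : Fin (n+1)) :
    ∑ a, proj y b a * proj z c a = (proj y * proj z) b c := by
  rw [mul_apply]
  refine Finset.sum_congr rfl fun a _ => ?_
  have : proj z c a = proj z a c := by
    conv_lhs => rw [← proj_transpose z]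
    exact Matrix.transpose_apply _ _ _
  rw [this]

lemma rayleigh_le {m : Type*} [Fintype m] [DecidableEq m] (A : Matrix m m ℝ)
    (hA : A.IsHermitian) (h : Finset.univ.Nonempty) (v : m → ℝ) :
    v ⬝ᵥ A *ᵥ v ≤ (Finset.univ.sup' h hA.eigenvalues) * (v ⬝ᵥ v) := by
  set β := Finset.univ.sup' h hA.eigenvalues with hβ
  have hspec := hA.spectral_theorem
  set U : Matrix m m ℝ := (Matrix.IsHermitian.eigenvectorUnitary hA : Matrix m m ℝ) with hU
  have hUU : U * star U = 1 :=
    (Matrix.mem_unitaryGroup_iff).mp (Matrix.IsHermitian.eigenvectorUnitary hA).2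
  set w : m → ℝ := (star U) *ᵥ v with hw
  have h1 : v ⬝ᵥ A *ᵥ v = w ⬝ᵥ (Matrix.diagonal hA.eigenvalues) *ᵥ w := by
    conv_lhs => rw [hspec]
    have : (U * Matrix.diagonal (RCLike.ofReal ∘ hA.eigenvalues) * star U) *ᵥ v
        = U *ᵥ ((Matrix.diagonal hA.eigenvalues) *ᵥ w) := by
      simp [hw, ← mulVec_mulVec]
    rw [Unitary.conjStarAlgAut_apply, ← hU, this, Matrix.dotProduct_mulVec]
    congr 1
    rw [hw]
    ext i
    simp [Matrix.vecMul, Matrix.mulVec, dotProduct, star_apply, mul_comm]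
  have hvU : Matrix.vecMul v U = w := by
    rw [hw]; ext i
    simp [Matrix.vecMul, Matrix.mulVec, dotProduct, star_apply, mul_comm]
  have h2 : v ⬝ᵥ v = w ⬝ᵥ w := by
    have : v ⬝ᵥ v = v ⬝ᵥ (U * star U) *ᵥ v := by rw [hUU]; simp
    rw [this, ← Matrix.mulVec_mulVec, Matrix.dotProduct_mulVec, hvU, ← hw]
  rw [h1, h2]
  have hle : ∀ i : m, hA.eigenvalues i ≤ β := fun i =>
    Finset.le_sup' hA.eigenvalues (Finset.mem_univ i)
  calc w ⬝ᵥ Matrix.diagonal hA.eigenvalues *ᵥ w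
      = ∑ i, hA.eigenvalues i * (w i * w i) := by
        simp only [dotProduct, Matrix.mulVec_diagonal]
        exact Finset.sum_congr rfl fun i _ => by ring
    _ ≤ ∑ i, β * (w i * w i) := by
        apply Finset.sum_le_sum
        intro i _
        exact mul_le_mul_of_nonneg_right (hle i) (mul_self_nonneg _)
    _ = β * (w ⬝ᵥ w) := by rw [dotProduct, Finset.mul_sum]

/-- The largest eigenvalue `β(x)` of the symmetric matrix `B(x)` is bounded below by
`(2/(N(n+1))) Σ_{{i,j}∈E} k_ij (n − 1 − ⟨xᵢ,xⱼ⟩)(1 − ⟨xᵢ,xⱼ⟩)`.  The sum over the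
(unordered) edges of `G` is written as half of the sum over ordered adjacent pairs. -/
theorem largest_eigenvalue_lower_bound
    {n N : ℕ} (hn : 2 ≤ n) (hN : 2 ≤ N)
    (G : SimpleGraph (Fin N)) [DecidableRel G.Adj]
    (k : Fin N → Fin N → ℝ) (hsymm : ∀ i j, k i j = k j i)
    (hpos : ∀ i j, G.Adj i j → 0 < k i j)
    (x : Fin N → Fin (n + 1) → ℝ) (hunit : ∀ i, x i ⬝ᵥ x i = 1)
    (hB : (Bmat G k x).IsHermitian) :
    2 / ((N : ℝ) * ((n : ℝ) + 1)) *
        ((1 : ℝ) / 2 * ∑ i, ∑ j ∈ G.neighborFinset i,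
          k i j * (((n : ℝ) - 1 - x i ⬝ᵥ x j) * (1 - x i ⬝ᵥ x j)))
      ≤ Finset.univ.sup' ⟨(⟨0, by omega⟩, (0 : Fin (n + 1))), Finset.mem_univ _⟩
          hB.eigenvalues := by
  set β := Finset.univ.sup' ⟨(⟨0, by omega⟩, (0 : Fin (n + 1))), Finset.mem_univ _⟩
      hB.eigenvalues with hβdef
  set T := ∑ i, ∑ j ∈ G.neighborFinset i,
      k i j * (((n : ℝ) - 1 - x i ⬝ᵥ x j) * (1 - x i ⬝ᵥ x j)) with hTdef
  set v : Fin (n+1) → (Fin N × Fin (n+1)) → ℝ := fun a p => proj (x p.1) p.2 a with hv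
  -- Rayleigh bound for each test vector
  have hray : ∀ a, v a ⬝ᵥ (Bmat G k x) *ᵥ v a ≤ β * (v a ⬝ᵥ v a) := fun a =>
    rayleigh_le _ hB _ (v a)
  -- norm computation
  have hnorm : ∑ a, v a ⬝ᵥ v a = (N : ℝ) * n := by
    have : ∑ a, v a ⬝ᵥ v a = ∑ p : Fin N × Fin (n+1), ∑ a, v a p * v a p := by
      rw [Finset.sum_comm]
      rfl
    rw [this]
    rw [Fintype.sum_prod_type]
    have h1 : ∀ i : Fin N, ∑ b, ∑ a, v a (i, b) * v a (i, b) = (n : ℝ) := by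
      intro i
      have : ∀ b : Fin (n+1), ∑ a, v a (i, b) * v a (i, b)
          = (proj (x i) * proj (x i)) b b := fun b => sumA (x i) (x i) b b
      simp only [this]
      have : ∑ b, (proj (x i) * proj (x i)) b b = Matrix.trace (proj (x i) * proj (x i)) := rfl
      rw [this, proj_idem (x i) (hunit i), trace_proj (x i) (hunit i)]
    simp only [h1, Finset.sum_const, Finset.card_univ, Fintype.card_fin, nsmul_eq_mul]
  -- quadratic form computation
  have hquad : ∑ a, v a ⬝ᵥ (Bmat G k x) *ᵥ v a = T := by
    have step1 : ∑ a, v a ⬝ᵥ (Bmat G k x) *ᵥ v a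
        = ∑ p : Fin N × Fin (n+1), ∑ q : Fin N × Fin (n+1),
            Bmat G k x p q * (proj (x p.1) * proj (x q.1)) p.2 q.2 := by
      calc ∑ a, v a ⬝ᵥ (Bmat G k x) *ᵥ v a
          = ∑ a, ∑ p, ∑ q, v a p * (Bmat G k x p q * v a q) := by
            refine Finset.sum_congr rfl fun a _ => ?_
            simp [dotProduct, Matrix.mulVec, Finset.mul_sum]
        _ = ∑ p, ∑ a, ∑ q, v a p * (Bmat G k x p q * v a q) := Finset.sum_comm
        _ = ∑ p, ∑ q, ∑ a, v a p * (Bmat G k x p q * v a q) :=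
            Finset.sum_congr rfl fun p _ => Finset.sum_comm
        _ = ∑ p, ∑ q, Bmat G k x p q * ∑ a, v a p * v a q := by
            refine Finset.sum_congr rfl fun p _ => Finset.sum_congr rfl fun q _ => ?_
            rw [Finset.mul_sum]
            exact Finset.sum_congr rfl fun a _ => by ring
        _ = _ := by
            refine Finset.sum_congr rfl fun p _ => Finset.sum_congr rfl fun q _ => ?_
            have : ∑ a, v a p * v a q = (proj (x p.1) * proj (x q.1)) p.2 q.2 :=
              sumA (x p.1) (x q.1) p.2 q.2
            rw [this]
    set F : Fin N → Fin N → ℝ := fun i j =>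
      ∑ b, ∑ c, Bmat G k x (i, b) (j, c) * (proj (x i) * proj (x j)) b c with hFdef
    have step2 : ∑ a, v a ⬝ᵥ (Bmat G k x) *ᵥ v a = ∑ i, ∑ j, F i j := by
      rw [step1]
      simp only [Fintype.sum_prod_type]
      refine Finset.sum_congr rfl fun i _ => ?_
      rw [Finset.sum_comm]
    have hFdiag : ∀ i, F i i
        = -(∑ l ∈ G.neighborFinset i, k i l * (x l ⬝ᵥ x i)) * (n : ℝ) := by
      intro i
      have hBi : ∀ b c : Fin (n+1), Bmat G k x (i, b) (i, c)
          = -(∑ l ∈ G.neighborFinset i, k i l * (x l ⬝ᵥ x i)) * proj (x i) b c := by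
        intro b c; simp [Bmat]
      rw [hFdef]
      simp only [hBi, proj_idem (x i) (hunit i)]
      have : ∑ b, ∑ c, -(∑ l ∈ G.neighborFinset i, k i l * (x l ⬝ᵥ x i)) * proj (x i) b c
            * proj (x i) b c
          = -(∑ l ∈ G.neighborFinset i, k i l * (x l ⬝ᵥ x i))
            * ∑ b, ∑ c, proj (x i) b c * proj (x i) b c := by
        rw [Finset.mul_sum]
        refine Finset.sum_congr rfl fun b _ => ?_
        rw [Finset.mul_sum]
        exact Finset.sum_congr rfl fun c _ => by ring
      rw [this, trace_form, proj_transpose, proj_idem (x i) (hunit i),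
        trace_proj (x i) (hunit i)]
    have hFadj : ∀ i j, G.Adj i j → F i j
        = k i j * ((n : ℝ) - 1 + (x i ⬝ᵥ x j)^2) := by
      intro i j hadj
      have hne : i ≠ j := hadj.ne
      have hBij : ∀ b c : Fin (n+1), Bmat G k x (i, b) (j, c)
          = k i j * (proj (x i) * proj (x j)) b c := by
        intro b c; simp [Bmat, hne, hadj]
      rw [hFdef]
      simp only [hBij]
      have : ∑ b, ∑ c, k i j * (proj (x i) * proj (x j)) b c
            * (proj (x i) * proj (x j)) b c
          = k i j * ∑ b, ∑ c, (proj (x i) * proj (x j)) b c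
            * (proj (x i) * proj (x j)) b c := by
        rw [Finset.mul_sum]
        refine Finset.sum_congr rfl fun b _ => ?_
        rw [Finset.mul_sum]
        exact Finset.sum_congr rfl fun c _ => by ring
      rw [this, trace_form, transpose_mul, proj_transpose, proj_transpose]
      have hM : (proj (x i) * proj (x j)) * (proj (x j) * proj (x i))
          = (proj (x i) * proj (x j)) * proj (x i) := by
        calc (proj (x i) * proj (x j)) * (proj (x j) * proj (x i))
            = proj (x i) * (proj (x j) * proj (x j)) * proj (x i) := by
              rw [mul_assoc, ← mul_assoc (proj (x j)), ← mul_assoc]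
          _ = (proj (x i) * proj (x j)) * proj (x i) := by
              rw [proj_idem (x j) (hunit j)]
      rw [hM, Matrix.trace_mul_comm, ← mul_assoc, proj_idem (x i) (hunit i),
        trace_proj_mul_proj (x i) (x j) (hunit i) (hunit j)]
    have hFnon : ∀ i j, i ≠ j → ¬ G.Adj i j → F i j = 0 := by
      intro i j hne hadj
      rw [hFdef]
      simp [Bmat, hne, hadj]
    rw [step2, hTdef]
    refine Finset.sum_congr rfl fun i _ => ?_
    have hsplit : ∑ j, F i j = F i i + ∑ j ∈ Finset.univ.erase i, F i j :=
      (Finset.add_sum_erase Finset.univ (F i) (Finset.mem_univ i)).symm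
    have hrest : ∑ j ∈ Finset.univ.erase i, F i j
        = ∑ j ∈ G.neighborFinset i, F i j := by
      refine (Finset.sum_subset ?_ ?_).symm
      · intro j hj
        have hadj : G.Adj i j := (SimpleGraph.mem_neighborFinset G i j).mp hj
        exact Finset.mem_erase.mpr ⟨hadj.ne', Finset.mem_univ j⟩
      · intro j hj hnj
        have hne : j ≠ i := (Finset.mem_erase.mp hj).1
        have hnadj : ¬ G.Adj i j := fun h =>
          hnj ((SimpleGraph.mem_neighborFinset G i j).mpr h)
        exact hFnon i j (Ne.symm hne) hnadj
    rw [hsplit, hrest, hFdiag i]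
    rw [Finset.sum_congr rfl fun j hj =>
      hFadj i j ((SimpleGraph.mem_neighborFinset G i j).mp hj)]
    rw [neg_mul, Finset.sum_mul, ← Finset.sum_neg_distrib, ← Finset.sum_add_distrib]
    refine Finset.sum_congr rfl fun j hj => ?_
    rw [dotProduct_comm (x j) (x i)]
    ring
  -- nonnegativity of T
  have hT0 : 0 ≤ T := by
    rw [hTdef]
    apply Finset.sum_nonneg
    intro i _
    apply Finset.sum_nonneg
    intro j hj
    have hadj : G.Adj i j := (SimpleGraph.mem_neighborFinset G i j).mp hj
    have hk := hpos i j hadj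
    have hcs : (x i ⬝ᵥ x j)^2 ≤ 1 := by
      have h := Finset.sum_mul_sq_le_sq_mul_sq Finset.univ (x i) (x j)
      have hi := hunit i
      have hj := hunit j
      simp only [dotProduct, sq] at *
      calc (∑ a, x i a * x j a) * (∑ a, x i a * x j a)
          ≤ (∑ a, x i a * x i a) * (∑ a, x j a * x j a) := by
            have := Finset.sum_mul_sq_le_sq_mul_sq Finset.univ (x i) (x j)
            simpa [sq] using this
        _ = 1 := by rw [hi, hj]; ring
    have hc1 : x i ⬝ᵥ x j ≤ 1 := by nlinarith
    have hn2 : (2 : ℝ) ≤ (n : ℝ) := by exact_mod_cast hn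
    apply mul_nonneg (le_of_lt hk)
    apply mul_nonneg <;> nlinarith
  -- combine
  have hsum : T ≤ β * ((N : ℝ) * n) := by
    calc T = ∑ a, v a ⬝ᵥ (Bmat G k x) *ᵥ v a := hquad.symm
      _ ≤ ∑ a, β * (v a ⬝ᵥ v a) := Finset.sum_le_sum fun a _ => hray a
      _ = β * ∑ a, v a ⬝ᵥ v a := by rw [Finset.mul_sum]
      _ = β * ((N : ℝ) * n) := by rw [hnorm]
  have hN2 : (2 : ℝ) ≤ (N : ℝ) := by exact_mod_cast hN
  have hn2 : (2 : ℝ) ≤ (n : ℝ) := by exact_mod_cast hn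
  have hNn : (0:ℝ) < (N:ℝ) * (n:ℝ) := by nlinarith
  have hβ0 : 0 ≤ β := by
    by_contra hneg
    push_neg at hneg
    have : β * ((N:ℝ)*(n:ℝ)) < 0 := mul_neg_of_neg_of_pos hneg hNn
    linarith
  have hD : (0 : ℝ) < (N : ℝ) * ((n : ℝ) + 1) := by nlinarith
  have : 2 / ((N : ℝ) * ((n : ℝ) + 1)) * ((1:ℝ)/2 * T) = T / ((N : ℝ) * ((n : ℝ)+1)) := by
    ring
  rw [this, div_le_iff₀ hD]
  nlinarith [mul_nonneg hβ0 (by linarith : (0:ℝ) ≤ (N:ℝ))]
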